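/- If 4Kρ^{1−γ} ≤ φ(v,v′) ≤ π/2, then (B D_ρ^{−1} R_v^{−1}) ∩ (B D_ρ^{−1} R_{v′}^{−1}) ⊆ 𝔹_{ρ^γ}^d; that is, every point lying in the image of B under both affine-linear maps x ↦ x D_ρ^{−1} R_v^{−1} and x ↦ x D_ρ^{−1} R_{v′}^{−1} has Euclidean norm strictly less than ρ^γ. -/

import Mathlib

open Metric Set

noncomputable section

/-- The first standard basis (row) vector `e₁ = (1,0,…,0)` in `ℝᵈ`. -/
def e1 (d : ℕ) : EuclideanSpace ℝ (Fin d) :=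
  WithLp.toLp 2 fun i => if (i : ℕ) = 0 then 1 else 0

/-- The linear map `x ↦ x D_ρ⁻¹` given by right multiplication with the inverse of the
diagonal matrix `D_ρ = diag(ρ^{d-1}, ρ^{-1}, …, ρ^{-1})`; explicitly it rescales the first
coordinate by `ρ^{1-d}` and the remaining coordinates by `ρ`. -/
def DinvMul (d : ℕ) (ρ : ℝ) (x : EuclideanSpace ℝ (Fin d)) : EuclideanSpace ℝ (Fin d) :=
  WithLp.toLp 2 fun i => if (i : ℕ) = 0 then ρ ^ ((1 : ℤ) - (d : ℤ)) * x i else ρ * x i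

open RealInnerProductSpace in
/-- The orthogonal complement (relative to `v`) of `R.symm (DinvMul d ρ x)` is small. -/
lemma aux_orth_small {d : ℕ} (hd : 2 ≤ d) {ρ K : ℝ} (hρ : 0 < ρ)
    (v : EuclideanSpace ℝ (Fin d))
    (R : EuclideanSpace ℝ (Fin d) ≃ₗᵢ[ℝ] EuclideanSpace ℝ (Fin d))
    (hRv : R v = e1 d) (x : EuclideanSpace ℝ (Fin d)) (hx : ‖x‖ ≤ K) :
    ‖R.symm (DinvMul d ρ x) - ⟪R.symm (DinvMul d ρ x), v⟫ • v‖ ≤ ρ * K := by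
  haveI : NeZero d := ⟨by omega⟩
  set y := R.symm (DinvMul d ρ x) with hy
  set a : ℝ := ⟪y, v⟫ with ha
  have hRy : R y = DinvMul d ρ x := R.apply_symm_apply _
  have ha' : a = (DinvMul d ρ x) 0 := by
    rw [ha, ← R.inner_map_map y v, hRy, hRv]
    rw [PiLp.inner_apply]
    simp only [e1, PiLp.toLp_apply, RCLike.inner_apply, conj_trivial]
    rw [Finset.sum_eq_single 0]
    · simp
    · intro b _ hb
      rw [if_neg, zero_mul]
      intro h
      exact hb (Fin.ext (by simpa using h))
    · simp
  have h1 : R (y - a • v) = DinvMul d ρ x - a • e1 d := by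
    rw [map_sub, map_smul, hRy, hRv]
  have h2 : ‖y - a • v‖ = ‖DinvMul d ρ x - a • e1 d‖ := by
    rw [← h1, R.norm_map]
  rw [h2]
  have h3 : ‖DinvMul d ρ x - a • e1 d‖ ≤ ρ * ‖x‖ := by
    have hxρ : ρ * ‖x‖ = ‖ρ • x‖ := by
      rw [norm_smul]; simp [abs_of_pos hρ]
    rw [hxρ, EuclideanSpace.norm_eq, EuclideanSpace.norm_eq]
    apply Real.sqrt_le_sqrt
    apply Finset.sum_le_sum
    intro i _
    by_cases hi : (i : ℕ) = 0
    · have hi0 : i = 0 := Fin.ext (by simpa using hi)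
      subst hi0
      simp [DinvMul, e1, ha', PiLp.smul_apply, smul_eq_mul]
      positivity
    · simp only [PiLp.sub_apply, PiLp.smul_apply, smul_eq_mul, DinvMul, e1, PiLp.toLp_apply, if_neg hi]
      simp
  calc ‖DinvMul d ρ x - a • e1 d‖ ≤ ρ * ‖x‖ := h3
    _ ≤ ρ * K := by nlinarith [norm_nonneg x]

open RealInnerProductSpace

set_option maxHeartbeats 1000000 in
/-- If `4 K ρ^{1-γ} ≤ φ(v,v') ≤ π/2` then
`(B D_ρ⁻¹ R_v⁻¹) ∩ (B D_ρ⁻¹ R_{v'}⁻¹) ⊆ 𝔹_{ρ^γ}^d`; here `R_v, R_{v'} ∈ SO(d)` (encoded as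
linear isometries of determinant one) satisfy `v R_v = e₁`, `v' R_{v'} = e₁`, and
`B ⊆ 𝔹_K^d`. -/
theorem intersection_of_stretched_images_in_small_ball
    (d : ℕ) (hd : 2 ≤ d) (K : ℝ) (hK : 0 < K)
    (B : Set (EuclideanSpace ℝ (Fin d))) (hB : B ⊆ Metric.ball 0 K)
    (γ ρ : ℝ) (hγ : γ ∈ Set.Ioo (0 : ℝ) 1) (hρ : ρ ∈ Set.Ioo (0 : ℝ) 1)
    (v v' : EuclideanSpace ℝ (Fin d)) (hv : ‖v‖ = 1) (hv' : ‖v'‖ = 1)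
    (R R' : EuclideanSpace ℝ (Fin d) ≃ₗᵢ[ℝ] EuclideanSpace ℝ (Fin d))
    (hRdet : LinearMap.det (R.toLinearEquiv : EuclideanSpace ℝ (Fin d) →ₗ[ℝ]
      EuclideanSpace ℝ (Fin d)) = 1)
    (hR'det : LinearMap.det (R'.toLinearEquiv : EuclideanSpace ℝ (Fin d) →ₗ[ℝ]
      EuclideanSpace ℝ (Fin d)) = 1)
    (hRv : R v = e1 d) (hR'v' : R' v' = e1 d)
    (hlow : 4 * K * ρ ^ (1 - γ) ≤ InnerProductGeometry.angle v v')
    (hupp : InnerProductGeometry.angle v v' ≤ Real.pi / 2) :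
    (R.symm '' (DinvMul d ρ '' B)) ∩ (R'.symm '' (DinvMul d ρ '' B))
      ⊆ Metric.ball 0 (ρ ^ γ) := by
  obtain ⟨hρ0, hρ1⟩ := hρ
  obtain ⟨hγ0, hγ1⟩ := hγ
  rintro y ⟨⟨w1, ⟨x, hxB, rfl⟩, rfl⟩, ⟨w2, ⟨x', hx'B, rfl⟩, hy2⟩⟩
  set y := R.symm (DinvMul d ρ x) with hydef
  have hx : ‖x‖ ≤ K := by
    have := hB hxB; rw [mem_ball, dist_zero_right] at this; exact this.le
  have hx' : ‖x'‖ ≤ K := by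
    have := hB hx'B; rw [mem_ball, dist_zero_right] at this; exact this.le
  have hw : ‖y - ⟪y, v⟫ • v‖ ≤ ρ * K := by
    rw [hydef]
    exact aux_orth_small hd hρ0 v R hRv x hx
  have hw' : ‖y - ⟪y, v'⟫ • v'‖ ≤ ρ * K := by
    have h0 := aux_orth_small hd hρ0 v' R' hR'v' x' hx'
    rwa [hy2] at h0
  set a : ℝ := ⟪y, v⟫ with hadef
  set a' : ℝ := ⟪y, v'⟫ with ha'def
  set φ := InnerProductGeometry.angle v v' with hφdef
  set c : ℝ := ⟪v, v'⟫ with hcdef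
  set s := Real.sin φ with hsdef
  have hφ0 : 0 ≤ φ := InnerProductGeometry.angle_nonneg v v'
  have hc : Real.cos φ = c := by
    rw [hφdef, InnerProductGeometry.cos_angle, hv, hv', one_mul, div_one]
  have hs2 : s ^ 2 = 1 - c ^ 2 := by
    rw [hsdef, Real.sin_sq, hc]
  have hπ : 0 < Real.pi := Real.pi_pos
  -- the inner-product computations
  have hvv : ⟪v, v⟫ = (1 : ℝ) := by
    rw [real_inner_self_eq_norm_sq, hv]; norm_num
  have hv'v' : ⟪v', v'⟫ = (1 : ℝ) := by
    rw [real_inner_self_eq_norm_sq, hv']; norm_num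
  -- ‖y‖² = a² + ‖y - a v‖²
  have hy2eq : ‖y‖ ^ 2 = a ^ 2 + ‖y - a • v‖ ^ 2 := by
    have h := norm_sub_sq_real y (a • v)
    rw [real_inner_smul_right, ← hadef, norm_smul] at h
    simp only [Real.norm_eq_abs] at h
    rw [hv] at h
    nlinarith [sq_abs a]
  -- key: a² (1 - c²) ≤ (2ρK)²
  have hseg : ‖a • v - a' • v'‖ ≤ 2 * (ρ * K) := by
    have heq : a • v - a' • v' = (y - a' • v') - (y - a • v) := by abel
    rw [heq]
    calc ‖(y - a' • v') - (y - a • v)‖ ≤ ‖y - a' • v'‖ + ‖y - a • v‖ := norm_sub_le _ _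
      _ ≤ 2 * (ρ * K) := by linarith
  have hkey : a ^ 2 * (1 - c ^ 2) ≤ (2 * (ρ * K)) ^ 2 := by
    have hsq : ‖a • v - a' • v'‖ ^ 2 = a ^ 2 - 2 * (a * a' * c) + a' ^ 2 := by
      rw [norm_sub_sq_real, real_inner_smul_left, real_inner_smul_right, ← hcdef,
        norm_smul, norm_smul]
      simp only [Real.norm_eq_abs]
      rw [hv, hv', mul_one, mul_one, sq_abs, sq_abs]
      ring
    have h1 : a ^ 2 * (1 - c ^ 2) ≤ ‖a • v - a' • v'‖ ^ 2 := by
      rw [hsq]; nlinarith [sq_nonneg (a' - a * c)]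
    have h2 : ‖a • v - a' • v'‖ ^ 2 ≤ (2 * (ρ * K)) ^ 2 := by
      apply pow_le_pow_left₀ (norm_nonneg _) hseg
    linarith
  -- sine lower bound
  have hsin : 2 / Real.pi * φ ≤ s := Real.mul_le_sin hφ0 hupp
  set t := ρ ^ γ with htdef
  set u := ρ ^ (1 - γ) with hudef
  have ht : 0 < t := Real.rpow_pos_of_pos hρ0 γ
  have hu : 0 < u := Real.rpow_pos_of_pos hρ0 (1 - γ)
  have hut : u * t = ρ := by
    rw [hudef, htdef, ← Real.rpow_add hρ0]
    norm_num
  have hKu : 4 * K * u ≤ Real.pi / 2 := le_trans hlow hupp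
  have hsge : 8 * K * u / Real.pi ≤ s := by
    have h1 : 2 / Real.pi * (4 * K * u) ≤ 2 / Real.pi * φ := by
      apply mul_le_mul_of_nonneg_left hlow
      positivity
    calc 8 * K * u / Real.pi = 2 / Real.pi * (4 * K * u) := by ring
      _ ≤ 2 / Real.pi * φ := h1
      _ ≤ s := hsin
  have hsge0 : 0 < 8 * K * u / Real.pi := by positivity
  -- a² ≤ π² t² / 16
  have hA : a ^ 2 * (8 * K * u / Real.pi) ^ 2 ≤ 4 * K ^ 2 * u ^ 2 * t ^ 2 := by
    have h1 : (8 * K * u / Real.pi) ^ 2 ≤ s ^ 2 := by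
      apply pow_le_pow_left₀ hsge0.le hsge
    have h2 : a ^ 2 * (8 * K * u / Real.pi) ^ 2 ≤ a ^ 2 * s ^ 2 :=
      mul_le_mul_of_nonneg_left h1 (sq_nonneg a)
    have h3 : a ^ 2 * s ^ 2 ≤ (2 * (ρ * K)) ^ 2 := by rw [hs2]; exact hkey
    have h4 : (2 * (ρ * K)) ^ 2 = 4 * K ^ 2 * u ^ 2 * t ^ 2 := by
      rw [← hut]; ring
    linarith
  have ha2 : a ^ 2 ≤ Real.pi ^ 2 * t ^ 2 / 16 := by
    rw [div_pow, ← mul_div_assoc, div_le_iff₀ (by positivity : (0:ℝ) < Real.pi ^ 2)] at hA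
    rw [← sub_nonneg]
    have h : Real.pi ^ 2 * t ^ 2 / 16 - a ^ 2
        = (4 * K ^ 2 * u ^ 2 * t ^ 2 * Real.pi ^ 2 - a ^ 2 * (8 * K * u) ^ 2)
          / (64 * (K ^ 2 * u ^ 2)) := by
      field_simp
      ring
    rw [h]
    apply div_nonneg _ (by positivity)
    linarith
  -- ‖y - a v‖ ≤ (π/8) t
  have hKu8 : K * u ≤ Real.pi / 8 := by linarith
  have hwt : ‖y - a • v‖ ≤ Real.pi / 8 * t := by
    calc ‖y - a • v‖ ≤ ρ * K := hw
      _ = K * u * t := by rw [← hut]; ring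
      _ ≤ Real.pi / 8 * t := by
          apply mul_le_mul_of_nonneg_right hKu8 ht.le
  -- conclude
  have hπ2 : Real.pi ^ 2 < 9.9225 := by
    have h : Real.pi ^ 2 < 3.15 ^ 2 := by
      apply pow_lt_pow_left₀ Real.pi_lt_d2 hπ.le
      norm_num
    have h315 : (3.15 : ℝ) ^ 2 = 9.9225 := by norm_num
    linarith
  have hw2 : ‖y - a • v‖ ^ 2 ≤ (Real.pi / 8 * t) ^ 2 :=
    pow_le_pow_left₀ (norm_nonneg _) hwt 2
  have hfin : ‖y‖ ^ 2 < t ^ 2 := by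
    have h1 : ‖y‖ ^ 2 ≤ 5 * Real.pi ^ 2 / 64 * t ^ 2 := by
      rw [hy2eq]
      have : (Real.pi / 8 * t) ^ 2 = Real.pi ^ 2 * t ^ 2 / 64 := by ring
      rw [this] at hw2
      have hexp : 5 * Real.pi ^ 2 / 64 * t ^ 2
          = Real.pi ^ 2 * t ^ 2 / 16 + Real.pi ^ 2 * t ^ 2 / 64 := by ring
      rw [hexp]
      linarith
    have h2 : 5 * Real.pi ^ 2 / 64 * t ^ 2 < 1 * t ^ 2 :=
      mul_lt_mul_of_pos_right (by linarith) (by positivity)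
    rw [one_mul] at h2
    linarith
  rw [mem_ball, dist_zero_right]
  exact lt_of_pow_lt_pow_left₀ 2 ht.le hfin

end
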